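/- Let F be a field with char F ≠ 2, 3, and let A be the 2-dimensional algebra with products e1·e1 = α1·e1, e1·e2 = (1−α1)·e2, e2·e1 = −α1·e2, e2·e2 = 0, where α1 ∈ F. If α1 ≠ 1/3, the automorphism group of A is exactly { e1 ↦ e1, e2 ↦ d·e2 : d ≠ 0 }; if α1 = 1/3, it is exactly { e1 ↦ e1 + c·e2, e2 ↦ d·e2 : c ∈ F, d ≠ 0 }. -/

import Mathlib

/-- Bilinear multiplication on `Fin 2 → F` determined by the four products
`e1·e1 = p11`, `e1·e2 = p12`, `e2·e1 = p21`, `e2·e2 = p22` of basis vectors. -/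
def mul2 {F : Type*} [Field F] (p11 p12 p21 p22 : Fin 2 → F) (u v : Fin 2 → F) : Fin 2 → F :=
  (u 0 * v 0) • p11 + (u 0 * v 1) • p12 + (u 1 * v 0) • p21 + (u 1 * v 1) • p22

theorem aux6 {F : Type*} [Field F] (α1 : F) (f : (Fin 2 → F) ≃ₗ[F] (Fin 2 → F)) :
    (∀ u v, f (mul2 ![α1, 0] ![0, 1 - α1] ![0, -α1] ![0, 0] u v) =
      mul2 ![α1, 0] ![0, 1 - α1] ![0, -α1] ![0, 0] (f u) (f v)) ↔
    (f ![1, 0] 0 = 1 ∧ f ![1, 0] 1 * (1 - 3 * α1) = 0 ∧ f ![0, 1] 0 = 0 ∧ f ![0, 1] 1 ≠ 0) := by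
  set a := f ![1, 0] 0 with ha
  set b := f ![1, 0] 1 with hb
  set c := f ![0, 1] 0 with hc
  set d := f ![0, 1] 1 with hd
  have key : ∀ u : Fin 2 → F, f u = ![u 0 * a + u 1 * c, u 0 * b + u 1 * d] := by
    intro u
    have hu : u = u 0 • ![(1:F), 0] + u 1 • ![0, 1] := by
      funext i; fin_cases i <;> simp
    rw [show f u = f (u 0 • ![(1:F), 0] + u 1 • ![0, 1]) by rw [← hu], map_add, map_smul,
      map_smul]
    funext i; fin_cases i <;> simp [← ha, ← hb, ← hc, ← hd]
  constructor
  · intro hf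
    have E : ∀ u v i, f (mul2 ![α1, 0] ![0, 1 - α1] ![0, -α1] ![0, 0] u v) i =
        mul2 ![α1, 0] ![0, 1 - α1] ![0, -α1] ![0, 0] (f u) (f v) i :=
      fun u v i => congrFun (hf u v) i
    have q1 := E ![1, 0] ![0, 1] 0
    have q2 := E ![0, 1] ![1, 0] 0
    have q3 := E ![1, 0] ![0, 1] 1
    have q4 := E ![0, 1] ![1, 0] 1
    have q5 := E ![1, 0] ![1, 0] 1
    simp [key, mul2] at q1 q2 q3 q4 q5
    have hcz : c = 0 := by linear_combination q1 - q2
    have hdnz : d ≠ 0 := by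
      intro h0
      have h5 : f ![0, 1] = f 0 := by
        rw [map_zero, key]; funext i; fin_cases i <;> simp [hcz, h0]
      have h6 := congrFun (f.injective h5) 1
      simp at h6
    have h6 : d * (1 - a) = 0 := by linear_combination q3 - q4 - b * hcz
    have ha1 : a = 1 := by
      rcases mul_eq_zero.mp h6 with h | h
      · exact absurd h hdnz
      · linear_combination -h
    refine ⟨ha1, ?_, hcz, hdnz⟩
    linear_combination -q5 + (2 * α1 * b - b) * ha1
  · rintro ⟨h1, hb0, hc0, hd0⟩
    intro u v
    simp only [key]
    funext i
    fin_cases i <;> simp [mul2] <;> rw [h1, hc0] <;>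
      first
      | linear_combination -(u 0 * v 0) * hb0
      | linear_combination

theorem stmt6 {F : Type*} [Field F] (h2 : (2 : F) ≠ 0) (h3 : (3 : F) ≠ 0) (α1 : F)
    (mul : (Fin 2 → F) → (Fin 2 → F) → (Fin 2 → F))
    (hmul : mul = mul2 ![α1, 0] ![0, 1 - α1] ![0, -α1] ![0, 0]) :
    (α1 ≠ (3 : F)⁻¹ → ∀ f : (Fin 2 → F) ≃ₗ[F] (Fin 2 → F), (∀ u v, f (mul u v) = mul (f u) (f v)) ↔
      (∃ dd : F, dd ≠ 0 ∧ f ![1, 0] = ![1, 0] ∧ f ![0, 1] = ![0, dd])) ∧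
    (α1 = (3 : F)⁻¹ → ∀ f : (Fin 2 → F) ≃ₗ[F] (Fin 2 → F), (∀ u v, f (mul u v) = mul (f u) (f v)) ↔
      (∃ c dd : F, dd ≠ 0 ∧ f ![1, 0] = ![1, c] ∧ f ![0, 1] = ![0, dd])) := by
  subst hmul
  constructor
  · intro hα f
    rw [aux6]
    constructor
    · rintro ⟨k1, k2, k3, k4⟩
      have h13 : (1 : F) - 3 * α1 ≠ 0 := by
        intro h
        apply hα
        field_simp
        linear_combination -h
      have hb0 : f ![1, 0] 1 = 0 := by
        rcases mul_eq_zero.mp k2 with h | h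
        · exact h
        · exact absurd h h13
      refine ⟨f ![0, 1] 1, k4, ?_, ?_⟩
      · funext i; fin_cases i <;> simp [k1, hb0]
      · funext i; fin_cases i <;> simp [k3]
    · rintro ⟨dd, hdd, hfe1, hfe2⟩
      have e10 := congrFun hfe1 0
      have e11 := congrFun hfe1 1
      have e20 := congrFun hfe2 0
      have e21 := congrFun hfe2 1
      simp at e10 e11 e20 e21
      exact ⟨e10, by rw [e11]; ring, e20, by rw [e21]; exact hdd⟩
  · intro hα f
    rw [aux6]
    have h13 : (1 : F) - 3 * α1 = 0 := by
      rw [hα]; field_simp; ring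
    constructor
    · rintro ⟨k1, k2, k3, k4⟩
      refine ⟨f ![1, 0] 1, f ![0, 1] 1, k4, ?_, ?_⟩
      · funext i; fin_cases i <;> simp [k1]
      · funext i; fin_cases i <;> simp [k3]
    · rintro ⟨cc, dd, hdd, hfe1, hfe2⟩
      have e10 := congrFun hfe1 0
      have e20 := congrFun hfe2 0
      have e21 := congrFun hfe2 1
      simp at e10 e20 e21
      exact ⟨e10, by rw [h13]; ring, e20, by rw [e21]; exact hdd⟩
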